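/- Let p : [0, τ] → ℝ solve p'(t) = κ(γ_T(δ(t)) − p(t)) with p(0) = p₀. Then the average work of the finite-time process, μ_W(τ) = (ε/τ) ∫₀^τ p(t) dt, satisfies μ_W(τ) = T ln(Z_T(δ_min)/Z_T(δ_max)) + (ε p₀/(κτ))(1 − e^{−κτ}) − (ε/(κτ))(G(τ) − e^{−κτ} G(0)). -/

import Mathlib

open Set

/-- The series `G(t) = -∑_{n=1}^∞ (-exp(-δ(t)/T))^n / (nε/(κτT) + 1)` with the linear
downward driving `δ(t) = δmax - (ε/τ) t`. -/
noncomputable def Gfun (T δmax ε κ τ : ℝ) (t : ℝ) : ℝ :=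
  -∑' n : ℕ, (-Real.exp (-(δmax - ε / τ * t) / T)) ^ (n + 1) /
      ((n + 1 : ℝ) * ε / (κ * τ * T) + 1)

/-- if `p` solves `p' = κ (γ_T(δ(t)) − p)` with `p 0 = p₀`, then the average
work `μ_W(τ) = (ε/τ) ∫₀^τ p(t) dt` equals
`T ln(Z(δmin)/Z(δmax)) + (ε p₀/(κτ)) (1 − e^{−κτ}) − (ε/(κτ)) (G(τ) − e^{−κτ} G(0))`,
where `Z(δ) = 1 + exp(−δ/T)`. -/
lemma tsum_neg_geom (x : ℝ) (h0 : 0 < x) (h1 : x < 1) :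
    ∑' n : ℕ, (-x) ^ (n + 1) = -x / (1 + x) := by
  have hnorm : ‖(-x : ℝ)‖ < 1 := by rw [norm_neg, Real.norm_eq_abs, abs_of_pos h0]; exact h1
  have hg : ∑' n : ℕ, (-x) ^ n = (1 - -x)⁻¹ := tsum_geometric_of_norm_lt_one hnorm
  calc ∑' n : ℕ, (-x) ^ (n + 1) = ∑' n : ℕ, (-x) * (-x) ^ n := by
        congr 1; ext n; rw [pow_succ]; ring
    _ = (-x) * ∑' n : ℕ, (-x) ^ n := tsum_mul_left
    _ = -x / (1 + x) := by rw [hg, sub_neg_eq_add, div_eq_mul_inv]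

theorem stmt3 (T δmin δmax τ κ p₀ : ℝ)
    (hT : 0 < T) (hmin : 0 < δmin) (hlt : δmin < δmax) (hτ : 0 < τ) (hκ : 0 < κ)
    (hp₀ : p₀ ∈ Icc (0 : ℝ) 1)
    (p : ℝ → ℝ) (hp0 : p 0 = p₀)
    (hp : ∀ t ∈ Icc (0 : ℝ) τ,
      HasDerivWithinAt p
        (κ * (1 / (1 + Real.exp ((δmax - (δmax - δmin) / τ * t) / T)) - p t))
        (Icc 0 τ) t) :
    (δmax - δmin) / τ * ∫ t in (0 : ℝ)..τ, p t =
      T * Real.log ((1 + Real.exp (-δmin / T)) / (1 + Real.exp (-δmax / T)))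
      + (δmax - δmin) * p₀ / (κ * τ) * (1 - Real.exp (-κ * τ))
      - (δmax - δmin) / (κ * τ) *
          (Gfun T δmax (δmax - δmin) κ τ τ
            - Real.exp (-κ * τ) * Gfun T δmax (δmax - δmin) κ τ 0) := by
  set ε : ℝ := δmax - δmin with hεdef
  have hε : 0 < ε := sub_pos.2 hlt
  set x : ℝ → ℝ := fun t => Real.exp (-(δmax - ε / τ * t) / T) with hxdef
  set c : ℕ → ℝ := fun n => (n + 1 : ℝ) * ε / (κ * τ * T) + 1 with hcdef
  have hc : ∀ n : ℕ, (1 : ℝ) ≤ c n := by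
    intro n
    have : 0 ≤ (n + 1 : ℝ) * ε / (κ * τ * T) := by positivity
    simp only [hcdef]; linarith
  have hc0 : ∀ n : ℕ, (0 : ℝ) < c n := fun n => lt_of_lt_of_le one_pos (hc n)
  set f : ℕ → ℝ → ℝ := fun n t => (-x t) ^ (n + 1) / c n with hfdef
  set G : ℝ → ℝ := Gfun T δmax ε κ τ with hGdef
  have hGf : ∀ t, G t = -∑' n : ℕ, f n t := fun t => rfl
  set a : ℝ := ε / τ / T with hadef
  have ha : 0 < a := by positivity
  have hxpos : ∀ t, 0 < x t := fun t => Real.exp_pos _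
  -- derivative of x
  have hx_deriv : ∀ t : ℝ, HasDerivAt x (x t * a) t := by
    intro t
    have h1 : HasDerivAt (fun t : ℝ => -(δmax - ε / τ * t) / T) a t := by
      have h2 : HasDerivAt (fun t : ℝ => ε / τ * t) (ε / τ) t := by
        simpa using (hasDerivAt_id t).const_mul (ε / τ)
      simpa [hadef] using ((h2.const_sub δmax).neg).div_const T
    exact h1.exp
  -- derivative of f n
  set fd : ℕ → ℝ → ℝ := fun n t => ((n : ℝ) + 1) * a * (-x t) ^ (n + 1) / c n with hfddef
  have hfd : ∀ (n : ℕ) (t : ℝ), HasDerivAt (f n) (fd n t) t := by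
    intro n t
    have h1 : HasDerivAt (fun t => (-x t) ^ (n + 1))
        ((↑(n + 1) : ℝ) * (-x t) ^ (n + 1 - 1) * (-(x t * a))) t :=
      (hx_deriv t).neg.pow (n + 1)
    have h2 := h1.div_const (c n)
    refine h2.congr_deriv ?_
    simp only [hfddef, Nat.add_sub_cancel, pow_succ]
    push_cast
    ring
  -- the open set and bounds
  set t₁ : ℝ := τ + τ * δmin / (2 * ε) with ht₁def
  have hτt₁ : τ < t₁ := by
    have h : 0 < τ * δmin / (2 * ε) := by positivity
    simp only [ht₁def]; linarith
  set q : ℝ := Real.exp (-(δmin / 2) / T) with hqdef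
  have hq0 : 0 < q := Real.exp_pos _
  have hq1 : q < 1 := by
    rw [hqdef, Real.exp_lt_one_iff]
    have : 0 < δmin / 2 / T := by positivity
    rw [neg_div]; linarith
  have hxq : ∀ t ∈ Iio t₁, x t ≤ q := by
    intro t ht
    apply Real.exp_le_exp.2
    rw [div_le_div_iff_of_pos_right hT, neg_le_neg_iff]
    have ht' : t < t₁ := ht
    have h2 : ε / τ * t < ε / τ * t₁ := by
      apply mul_lt_mul_of_pos_left ht' (by positivity)
    have h3 : ε / τ * t₁ = ε + δmin / 2 := by
      rw [ht₁def]
      field_simp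
    rw [h3] at h2
    simp only [hεdef] at h2 ⊢
    linarith
  -- summable bound
  set u : ℕ → ℝ := fun n => κ * q ^ (n + 1) with hudef
  have hu : Summable u := by
    have := (summable_geometric_of_lt_one hq0.le hq1).mul_left (κ * q)
    apply this.congr
    intro n
    simp only [hudef, pow_succ]
    ring
  have hbound : ∀ (n : ℕ), ∀ t ∈ Iio t₁, ‖fd n t‖ ≤ u n := by
    intro n t ht
    have hxt := hxpos t
    have hxqt := hxq t ht
    have h1 : ‖fd n t‖ = ((n : ℝ) + 1) * a * (x t) ^ (n + 1) / c n := by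
      simp only [hfddef]
      rw [Real.norm_eq_abs, abs_div, abs_of_pos (hc0 n), abs_mul, abs_pow, abs_neg,
        abs_of_pos hxt, abs_mul]
      rw [abs_of_nonneg (by positivity : (0:ℝ) ≤ (n:ℝ) + 1), abs_of_pos ha]
    rw [h1, hudef]
    have hka : ((n : ℝ) + 1) * a ≤ κ * c n := by
      have : κ * c n = ((n : ℝ) + 1) * a + κ := by
        simp only [hcdef, hadef]
        field_simp
      rw [this]; linarith
    have h4 : ((n : ℝ) + 1) * a / c n ≤ κ := (div_le_iff₀ (hc0 n)).2 hka
    calc ((n : ℝ) + 1) * a * x t ^ (n + 1) / c n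
        = (((n : ℝ) + 1) * a / c n) * x t ^ (n + 1) := by ring
      _ ≤ κ * q ^ (n + 1) :=
          mul_le_mul h4 (pow_le_pow_left₀ hxt.le hxqt _) (by positivity) hκ.le
  have hsumf : ∀ t ∈ Iio t₁, Summable fun n => f n t := by
    intro t ht
    apply Summable.of_norm_bounded (g := fun n => q ^ (n + 1)) ?_ ?_
    · have := (summable_geometric_of_lt_one hq0.le hq1).mul_left q
      apply this.congr; intro n; rw [pow_succ]; ring
    · intro n
      simp only [hfdef]
      rw [Real.norm_eq_abs, abs_div, abs_of_pos (hc0 n), abs_pow, abs_neg,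
        abs_of_pos (hxpos t)]
      calc x t ^ (n + 1) / c n ≤ x t ^ (n + 1) / 1 := by
            apply div_le_div_of_nonneg_left (by positivity) one_pos (hc n)
        _ = x t ^ (n + 1) := div_one _
        _ ≤ q ^ (n + 1) := pow_le_pow_left₀ (hxpos t).le (hxq t ht) _
  have hsumgeom : ∀ t ∈ Iio t₁, Summable fun n : ℕ => (-x t) ^ (n + 1) := by
    intro t ht
    apply Summable.of_norm_bounded (g := fun n => q ^ (n + 1)) ?_ ?_
    · have := (summable_geometric_of_lt_one hq0.le hq1).mul_left q
      apply this.congr; intro n; rw [pow_succ]; ring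
    · intro n
      rw [Real.norm_eq_abs, abs_pow, abs_neg, abs_of_pos (hxpos t)]
      exact pow_le_pow_left₀ (hxpos t).le (hxq t ht) _
  have hxlt1 : ∀ t ∈ Iio t₁, x t < 1 := fun t ht => lt_of_le_of_lt (hxq t ht) hq1
  -- γ as x/(1+x)
  have hγ : ∀ t : ℝ, 1 / (1 + Real.exp ((δmax - ε / τ * t) / T)) = x t / (1 + x t) := by
    intro t
    have h1 : Real.exp ((δmax - ε / τ * t) / T) = (x t)⁻¹ := by
      rw [hxdef]
      simp only
      rw [← Real.exp_neg, neg_div, neg_neg]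
    rw [h1]
    have h2 := (hxpos t).ne'
    field_simp
    ring
  -- derivative of G on Iio t₁
  have hG : ∀ t ∈ Iio t₁, HasDerivAt G
      (κ * (1 / (1 + Real.exp ((δmax - ε / τ * t) / T)) - G t)) t := by
    intro t ht
    have h0mem : (0 : ℝ) ∈ Iio t₁ := by
      simp only [mem_Iio]; linarith
    have hS : HasDerivAt (fun z => ∑' n, f n z) (∑' n, fd n t) t :=
      hasDerivAt_tsum_of_isPreconnected hu isOpen_Iio isPreconnected_Iio
        (fun n y _ => hfd n y) hbound h0mem (hsumf 0 h0mem) ht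
    have hS' : HasDerivAt G (-∑' n, fd n t) t := hS.neg
    convert hS' using 1
    -- identity for the sum of derivatives
    have hptw : ∀ n : ℕ, fd n t = κ * (-x t) ^ (n + 1) - κ * f n t := by
      intro n
      simp only [hfddef, hfdef, hcdef, hadef]
      have h2 : ((n:ℝ) + 1) * ε / (κ * τ * T) + 1 ≠ 0 := (hc0 n).ne'
      field_simp
      ring
    have hsum1 : Summable fun n => κ * (-x t) ^ (n + 1) := (hsumgeom t ht).mul_left κ
    have hsum2 : Summable fun n => κ * f n t := (hsumf t ht).mul_left κ
    have : ∑' n, fd n t = κ * (∑' n, (-x t) ^ (n + 1)) - κ * (∑' n, f n t) := by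
      calc ∑' n, fd n t = ∑' n, (κ * (-x t) ^ (n + 1) - κ * f n t) := by
            congr 1; ext n; exact hptw n
        _ = (∑' n, κ * (-x t) ^ (n + 1)) - ∑' n, κ * f n t :=
            Summable.tsum_sub hsum1 hsum2
        _ = κ * (∑' n, (-x t) ^ (n + 1)) - κ * (∑' n, f n t) := by
            rw [tsum_mul_left, tsum_mul_left]
    rw [this, tsum_neg_geom (x t) (hxpos t) (hxlt1 t ht), hγ t, hGf t]
    ring
  -- Step B : p t = G t + (p₀ - G 0) * exp (-(κ t)) on [0, τ]
  have hIccU : Icc (0:ℝ) τ ⊆ Iio t₁ := fun s hs => lt_of_le_of_lt hs.2 hτt₁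
  set Φ : ℝ → ℝ := fun t => Real.exp (κ * t) * (p t - G t) with hΦdef
  have hΦderiv : ∀ t ∈ Icc (0:ℝ) τ, HasDerivWithinAt Φ 0 (Icc 0 τ) t := by
    intro t ht
    have hexp : HasDerivAt (fun t : ℝ => Real.exp (κ * t)) (Real.exp (κ * t) * κ) t := by
      have : HasDerivAt (fun t : ℝ => κ * t) κ t := by
        simpa using (hasDerivAt_id t).const_mul κ
      exact this.exp
    have hGw := (hG t (hIccU ht)).hasDerivWithinAt (s := Icc (0:ℝ) τ)
    have hprod := (hexp.hasDerivWithinAt).mul ((hp t ht).sub hGw)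
    refine hprod.congr_deriv ?_
    simp only [Pi.sub_apply]; ring
  have hΦcont : ContinuousOn Φ (Icc 0 τ) := fun t ht => (hΦderiv t ht).continuousWithinAt
  have hΦconst : ∀ t ∈ Icc (0:ℝ) τ, Φ t = Φ 0 := by
    apply constant_of_has_deriv_right_zero hΦcont
    intro s hs
    exact (hΦderiv s (Ico_subset_Icc_self hs)).mono_of_mem_nhdsWithin
      (Icc_mem_nhdsGE_of_mem hs)
  have hΦ0 : Φ 0 = p₀ - G 0 := by
    simp [hΦdef, hp0]
  have hpG : ∀ t ∈ Icc (0:ℝ) τ, p t = G t + (p₀ - G 0) * Real.exp (-(κ * t)) := by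
    intro t ht
    have h1 := hΦconst t ht
    rw [hΦ0, hΦdef] at h1
    simp only at h1
    have h2 : Real.exp (κ * t) ≠ 0 := Real.exp_ne_zero _
    rw [Real.exp_neg]
    field_simp
    linarith [h1]
  -- Step C : antiderivative
  set P : ℝ → ℝ := fun t => τ * T / ε * Real.log (1 + x t) - G t / κ
      - (p₀ - G 0) / κ * Real.exp (-(κ * t)) with hPdef
  have hP : ∀ t ∈ Icc (0:ℝ) τ, HasDerivAt P (p t) t := by
    intro t ht
    have h1x : (1 : ℝ) + x t ≠ 0 := by positivity
    have hlog : HasDerivAt (fun t => Real.log (1 + x t)) (x t * a / (1 + x t)) t :=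
      ((hx_deriv t).const_add 1).log h1x
    have hexpn : HasDerivAt (fun t : ℝ => Real.exp (-(κ * t)))
        (Real.exp (-(κ * t)) * -κ) t := by
      have : HasDerivAt (fun t : ℝ => -(κ * t)) (-κ) t := by
        exact ((hasDerivAt_id t).const_mul κ).neg.congr_deriv (by ring)
      exact this.exp
    have hcomb := ((hlog.const_mul (τ * T / ε)).sub ((hG t (hIccU ht)).div_const κ)).sub
      (hexpn.const_mul ((p₀ - G 0) / κ))
    refine hcomb.congr_deriv ?_
    rw [hγ t, hpG t ht]
    have e1 : τ * T / ε * (x t * a / (1 + x t)) = x t / (1 + x t) := by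
      rw [hadef]; field_simp
    have e2 : κ * (x t / (1 + x t) - G t) / κ = x t / (1 + x t) - G t := by
      field_simp
    have e3 : (p₀ - G 0) / κ * (Real.exp (-(κ * t)) * -κ)
        = -((p₀ - G 0) * Real.exp (-(κ * t))) := by
      field_simp
    rw [e1, e2, e3]
    ring
  -- integrate
  have hpcont : ContinuousOn p (Icc 0 τ) := fun t ht => (hp t ht).continuousWithinAt
  have hpint : IntervalIntegrable p MeasureTheory.volume 0 τ := by
    apply ContinuousOn.intervalIntegrable
    rwa [uIcc_of_le hτ.le]
  have hint : ∫ t in (0:ℝ)..τ, p t = P τ - P 0 := by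
    apply intervalIntegral.integral_eq_sub_of_hasDerivAt
    · intro t ht
      rw [uIcc_of_le hτ.le] at ht
      exact hP t ht
    · exact hpint
  -- final algebra
  have hxτ : x τ = Real.exp (-δmin / T) := by
    simp only [hxdef]
    congr 1
    have : ε / τ * τ = ε := by field_simp
    rw [this, hεdef]
    ring
  have hx0 : x 0 = Real.exp (-δmax / T) := by
    simp only [hxdef]
    norm_num
  have hA : (0:ℝ) < 1 + Real.exp (-δmin / T) := by positivity
  have hB : (0:ℝ) < 1 + Real.exp (-δmax / T) := by positivity
  rw [hint, Real.log_div hA.ne' hB.ne']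
  simp only [hPdef, hxτ, hx0, mul_zero, neg_zero, Real.exp_zero, neg_mul]
  field_simp
  ring
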